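/- Small basis for one-step predecessors of upward closures in a k-NRCS: let N be a k-NRCS, t a transition of N, and C a configuration. For every configuration C' such that C' →_t D holds for some configuration D with C ≤_is D, there exists a configuration C'' such that C'' ≤_is C', the number of nodes of C'' is at most (number of nodes of C) + k + 1, and C'' →_t D'' holds for some configuration D'' with C ≤_is D''. -/

import Mathlib

/-- Finite rooted ordered representation of finite rooted *unordered* labelled trees.
Unorderedness is handled by comparing trees up to permutation of children. -/
inductive STree (Q : Type) : Type
  | node (label : Q) (children : List (STree Q)) : STree Q

namespace STree

variable {Q : Type}

/-- The label of the root. -/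
def rootLabel : STree Q → Q
  | node a _ => a

/-- The children of the root. -/
def children : STree Q → List (STree Q)
  | node _ ts => ts

end STree

mutual
  /-- Number of nodes. -/
  def STree.size {Q : Type} : STree Q → ℕ
    | .node _ ts => 1 + STree.sizeL ts
  /-- Total number of nodes of a list of trees. -/
  def STree.sizeL {Q : Type} : List (STree Q) → ℕ
    | [] => 0
    | t :: ts => STree.size t + STree.sizeL ts
end

mutual
  /-- Height (a single node has height 0). -/
  def STree.height {Q : Type} : STree Q → ℕ
    | .node _ ts => STree.heightL ts
  /-- One plus the maximal height of a list of trees (0 for the empty list). -/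
  def STree.heightL {Q : Type} : List (STree Q) → ℕ
    | [] => 0
    | t :: ts => max (STree.height t + 1) (STree.heightL ts)
end

namespace STree

end STree

mutual
  /-- `TreeLe C C'` is the induced-subtree ordering `C ≤_is C'`: `C` is obtained from `C'`
  by deleting whole subtrees (equivalently, there is a root-preserving, label-preserving
  injection of the nodes of `C` into the nodes of `C'` such that two nodes are adjacent in
  `C` iff their images are adjacent in `C'`). -/
  inductive TreeLe {Q : Type} : STree Q → STree Q → Prop
    | node {a : Q} {ts us : List (STree Q)} :
        ForestLe ts us → TreeLe (.node a ts) (.node a us)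

  /-- An (unordered) embedding of a list of trees into another: an injection matching each
  tree on the left with a distinct tree on the right that dominates it w.r.t. `TreeLe`. -/
  inductive ForestLe {Q : Type} : List (STree Q) → List (STree Q) → Prop
    | nil (us : List (STree Q)) : ForestLe [] us
    | cons {t u : STree Q} {ts us : List (STree Q)} :
        TreeLe t u → ForestLe ts us → ForestLe (t :: ts) (u :: us)
    | skip {u : STree Q} {ts us : List (STree Q)} :
        ForestLe ts us → ForestLe ts (u :: us)
    | permR {ts us us' : List (STree Q)} :
        ForestLe ts us → us.Perm us' → ForestLe ts us'
end

mutual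
  /-- Equality of trees as finite rooted *unordered* labelled trees. -/
  inductive TreeEquiv {Q : Type} : STree Q → STree Q → Prop
    | node {a : Q} {ts us : List (STree Q)} :
        ForestEquiv ts us → TreeEquiv (.node a ts) (.node a us)

  /-- Lists of trees matched bijectively (up to permutation) by `TreeEquiv`. -/
  inductive ForestEquiv {Q : Type} : List (STree Q) → List (STree Q) → Prop
    | nil : ForestEquiv [] []
    | cons {t u : STree Q} {ts us : List (STree Q)} :
        TreeEquiv t u → ForestEquiv ts us → ForestEquiv (t :: ts) (u :: us)
    | permR {ts us us' : List (STree Q)} :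
        ForestEquiv ts us → us.Perm us' → ForestEquiv ts us'
end

/-- `HasPath ps t` : there is a path from the root of `t` (inclusive) whose successive
labels are exactly the (nonempty) list `ps`. -/
inductive HasPath {Q : Type} : List Q → STree Q → Prop
  | single (p : Q) (ts : List (STree Q)) : HasPath [p] (.node p ts)
  | cons (p : Q) {ps : List Q} {ts : List (STree Q)} {t : STree Q} :
      t ∈ ts → HasPath ps t → HasPath (p :: ps) (.node p ts)

/-- `mkChain q qs` is the path-shaped tree with labels `q, qs...`. -/
def mkChain {Q : Type} : Q → List Q → STree Q
  | q, [] => .node q []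
  | q, r :: rest => .node q [mkChain r rest]

/-- Attach the (possibly empty) fresh chain labelled `qs` as a new child. -/
def attachChain {Q : Type} : List Q → List (STree Q) → List (STree Q)
  | [], ts => ts
  | r :: rest, ts => mkChain r rest :: ts

/-- Application of an update transition `(p_0,…,p_i) →u (q_0,…,q_j)` (given as the two label
lists) to a configuration: fire along a root path labelled `p_0,…,p_i`, relabel the common
prefix, and either create fresh nodes labelled `q_{i+1},…,q_j` (if `i ≤ j`) or delete the
subtree rooted at `v_{j+1}` (if `j < i`). -/
inductive UStep {Q : Type} : List Q → List Q → STree Q → STree Q → Prop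
  | last (p q : Q) (rest : List Q) (ts : List (STree Q)) :
      UStep [p] (q :: rest) (.node p ts) (.node q (attachChain rest ts))
  | delete (p q : Q) {ps : List Q} (hps : ps ≠ []) {t : STree Q} (l r : List (STree Q)) :
      HasPath ps t →
      UStep (p :: ps) [q] (.node p (l ++ t :: r)) (.node q (l ++ r))
  | go (p q : Q) {ps qs : List Q} (hps : ps ≠ []) (hqs : qs ≠ []) {t t' : STree Q}
      (l r : List (STree Q)) :
      UStep ps qs t t' →
      UStep (p :: ps) (q :: qs) (.node p (l ++ t :: r)) (.node q (l ++ t' :: r))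

/-- Application of a reset transition `(p_0,…,p_i) →r,x (q_0,…,q_i)` to a configuration:
fire along a root path labelled `p_0,…,p_i`, relabel it to `q_0,…,q_i`, and delete every
subtree rooted at a child of the last path node whose label is `x`. -/
inductive RStep {Q : Type} [DecidableEq Q] : List Q → Q → List Q → STree Q → STree Q → Prop
  | last (p q x : Q) (ts : List (STree Q)) :
      RStep [p] x [q] (.node p ts) (.node q (ts.filter (fun t => t.rootLabel ≠ x)))
  | go (p q x : Q) {ps qs : List Q} (hps : ps ≠ []) {t t' : STree Q} (l r : List (STree Q)) :
      RStep ps x qs t t' →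
      RStep (p :: ps) x (q :: qs) (.node p (l ++ t :: r)) (.node q (l ++ t' :: r))

/-- A transition of a `k`-NRCS : either an update transition or a reset transition,
presented by its label lists. -/
inductive NTrans (Q : Type) : Type
  | upd (ps qs : List Q) : NTrans Q
  | rst (ps : List Q) (x : Q) (qs : List Q) : NTrans Q

/-- A `k`-NRCS `(Q, δ_u, δ_r)` : a finite set of update transitions
`δ_u ⊆ ⋃_{1 ≤ i,j ≤ k+1} Q^i × Q^j` and a finite set of reset transitions
`δ_r ⊆ ⋃_{1 ≤ i ≤ k} Q^i × Q × Q^i` (the state set is the ambient type `Q`). -/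
structure NRCS (Q : Type) [DecidableEq Q] (k : ℕ) where
  update : Finset (List Q × List Q)
  reset : Finset (List Q × Q × List Q)
  update_wf : ∀ t ∈ update, 1 ≤ t.1.length ∧ t.1.length ≤ k + 1 ∧
      1 ≤ t.2.length ∧ t.2.length ≤ k + 1
  reset_wf : ∀ t ∈ reset, 1 ≤ t.1.length ∧ t.1.length ≤ k ∧ t.2.2.length = t.1.length

namespace NRCS

variable {Q : Type} [DecidableEq Q] {k : ℕ}

/-- Membership of a transition in an NRCS. -/
def hasTrans (N : NRCS Q k) : NTrans Q → Prop
  | .upd ps qs => (ps, qs) ∈ N.update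
  | .rst ps x qs => (ps, x, qs) ∈ N.reset

/-- `C →_t C'` : a step via the particular transition `t`. -/
def TransStep : NTrans Q → STree Q → STree Q → Prop
  | .upd ps qs, C, C' => UStep ps qs C C'
  | .rst ps x qs, C, C' => RStep ps x qs C C'

/-- The step relation `C → C'` of the NRCS `N`. -/
def Step (N : NRCS Q k) (C C' : STree Q) : Prop :=
  ∃ t : NTrans Q, N.hasTrans t ∧ TransStep t C C'

/-- Reachability `C →* C'` (reflexive-transitive closure of the step relation). -/
def Reaches (N : NRCS Q k) : STree Q → STree Q → Prop :=
  Relation.ReflTransGen N.Step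

/-- The lossy step relation: first delete some whole subtrees, then take a standard step. -/
def LossyStep (N : NRCS Q k) (C D : STree Q) : Prop :=
  ∃ C₀ : STree Q, TreeLe C₀ C ∧ N.Step C₀ D

/-- Lossy reachability. -/
def LossyReaches (N : NRCS Q k) : STree Q → STree Q → Prop :=
  Relation.ReflTransGen N.LossyStep

end NRCS

section Aux
variable {Q : Type}

mutual
theorem TreeLe.refl : ∀ t : STree Q, TreeLe t t
  | .node _ ts => .node (ForestLe.refl ts)
theorem ForestLe.refl : ∀ ts : List (STree Q), ForestLe ts ts
  | [] => .nil []
  | t :: ts => .cons (TreeLe.refl t) (ForestLe.refl ts)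
end

theorem forestLe_to {ts us : List (STree Q)} (h : ForestLe ts us) :
    ∃ vs, List.Forall₂ TreeLe ts vs ∧ vs.Subperm us := by
  refine ForestLe.rec (motive_1 := fun _ _ _ => True)
    (motive_2 := fun ts us _ => ∃ vs, List.Forall₂ TreeLe ts vs ∧ vs.Subperm us)
    ?_ ?_ ?_ ?_ ?_ h
  · intros; trivial
  · exact fun us => ⟨[], .nil, List.nil_subperm⟩
  · rintro t u ts us h1 h2 - ⟨vs, hf, l, hl, hsl⟩
    exact ⟨u :: vs, .cons h1 hf, u :: l, hl.cons u, hsl.cons₂ u⟩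
  · rintro u ts us h ⟨vs, hf, hsp⟩
    exact ⟨vs, hf, hsp.trans (List.sublist_cons_self _ _).subperm⟩
  · rintro ts us us' h hp ⟨vs, hf, hsp⟩
    exact ⟨vs, hf, hsp.trans hp.subperm⟩

theorem forall₂_sublist {ts vs us : List (STree Q)}
    (hsl : vs.Sublist us) (hf : List.Forall₂ TreeLe ts vs) : ForestLe ts us := by
  induction hsl generalizing ts with
  | slnil => cases hf; exact .nil _
  | cons a _ ih => exact .skip (ih hf)
  | cons_cons a _ ih =>
      cases hf with
      | cons h1 h2 => exact .cons h1 (ih h2)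

theorem forestLe_of {ts vs us : List (STree Q)}
    (hf : List.Forall₂ TreeLe ts vs) (hsp : vs.Subperm us) : ForestLe ts us := by
  obtain ⟨w, hw, hsl⟩ := List.subperm_iff.mp hsp
  exact .permR (forall₂_sublist hsl hf) hw

theorem forall₂_perm_left {α β : Type} {R : α → β → Prop} {as as' : List α} {bs : List β}
    (hp : as.Perm as') (hf : List.Forall₂ R as bs) :
    ∃ bs', bs.Perm bs' ∧ List.Forall₂ R as' bs' := by
  induction hp generalizing bs with
  | nil => cases hf; exact ⟨[], .nil, .nil⟩
  | cons a _ ih =>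
      cases hf with
      | cons h1 h2 =>
          obtain ⟨bs', hbp, hbf⟩ := ih h2
          exact ⟨_ :: bs', hbp.cons _, .cons h1 hbf⟩
  | swap a b =>
      cases hf with
      | cons h1 h2 =>
          cases h2 with
          | cons h3 h4 => exact ⟨_, List.Perm.swap _ _ _, .cons h3 (.cons h1 h4)⟩
  | trans _ _ ih1 ih2 =>
      obtain ⟨bs₁, hp1, hf1⟩ := ih1 hf
      obtain ⟨bs₂, hp2, hf2⟩ := ih2 hf1
      exact ⟨bs₂, hp1.trans hp2, hf2⟩

theorem forestLe_permL {ts ts' us : List (STree Q)}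
    (h : ForestLe ts us) (hp : ts.Perm ts') : ForestLe ts' us := by
  obtain ⟨vs, hf, hsp⟩ := forestLe_to h
  obtain ⟨vs', hvp, hf'⟩ := forall₂_perm_left hp hf
  exact forestLe_of hf' ((hvp.symm.subperm).trans hsp)

theorem forestLe_sublist_right {ts us ws : List (STree Q)}
    (h : ForestLe ts us) (hsl : us.Sublist ws) : ForestLe ts ws := by
  obtain ⟨vs, hf, hsp⟩ := forestLe_to h
  exact forestLe_of hf (hsp.trans hsl.subperm)

/-- decompose an embedding into `u :: us`. -/
theorem forestLe_cons_decomp {cs us : List (STree Q)} {u : STree Q}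
    (h : ForestLe cs (u :: us)) :
    ForestLe cs us ∨ ∃ c cs', cs.Perm (c :: cs') ∧ TreeLe c u ∧ ForestLe cs' us := by
  obtain ⟨vs, hf, l₀, hl₀, hsl⟩ := forestLe_to h
  rcases List.sublist_cons_iff.mp hsl with hsl' | ⟨r₀, rfl, hr₀⟩
  · exact .inl (forestLe_of hf ⟨l₀, hl₀, hsl'⟩)
  · obtain ⟨cs₃, hcp3, hf₃⟩ : ∃ cs₃, cs.Perm cs₃ ∧ List.Forall₂ TreeLe cs₃ (u :: r₀) := by
      have hflip : List.Forall₂ (flip TreeLe) vs cs := hf.flip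
      obtain ⟨cs₃, hcp3, hf₃⟩ := forall₂_perm_left hl₀.symm hflip
      exact ⟨cs₃, hcp3, hf₃.flip⟩
    cases hf₃ with
    | cons h1 h2 =>
        exact .inr ⟨_, _, hcp3, h1, forestLe_of h2 hr₀.subperm⟩

theorem forall₂_mem {cs vs : List (STree Q)} {c : STree Q}
    (hf : List.Forall₂ TreeLe cs vs) (hc : c ∈ cs) : ∃ v ∈ vs, TreeLe c v := by
  induction hf with
  | nil => cases hc
  | cons h1 _ ih =>
      cases hc with
      | head => exact ⟨_, List.mem_cons_self, h1⟩
      | tail _ hc =>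
          obtain ⟨v, hv, hle⟩ := ih hc
          exact ⟨v, List.mem_cons_of_mem _ hv, hle⟩

theorem forestLe_mem {cs us : List (STree Q)} (h : ForestLe cs us) {c : STree Q}
    (hc : c ∈ cs) : ∃ u ∈ us, TreeLe c u := by
  obtain ⟨vs, hf, hsp⟩ := forestLe_to h
  obtain ⟨v, hv, hle⟩ := forall₂_mem hf hc
  exact ⟨v, hsp.subset hv, hle⟩

theorem treeLe_rootLabel {t u : STree Q} (h : TreeLe t u) :
    t.rootLabel = u.rootLabel := by
  cases h; rfl

theorem forestLe_singleton {a t : STree Q} {us : List (STree Q)}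
    (h : TreeLe a t) (ht : t ∈ us) : ForestLe [a] us := by
  induction us with
  | nil => cases ht
  | cons u us ih =>
      cases ht with
      | head => exact .cons h (.nil _)
      | tail _ ht => exact .skip (ih ht)

theorem forestLe_insert {a t : STree Q} {cs l r : List (STree Q)}
    (h : TreeLe a t) (hf : ForestLe cs (l ++ r)) :
    ForestLe (a :: cs) (l ++ t :: r) := by
  obtain ⟨vs, hfa, hsp⟩ := forestLe_to hf
  refine forestLe_of (.cons h hfa) ?_
  obtain ⟨l₀, hl₀, hsl⟩ := hsp
  have h1 : (t :: vs).Subperm (t :: (l ++ r)) := ⟨t :: l₀, hl₀.cons t, hsl.cons₂ t⟩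
  exact h1.trans List.perm_middle.symm.subperm

end Aux

section Aux2
variable {Q : Type}

theorem size_node (a : Q) (ts : List (STree Q)) :
    (STree.node a ts).size = 1 + STree.sizeL ts := by
  simp [STree.size]

theorem sizeL_nil : STree.sizeL ([] : List (STree Q)) = 0 := by simp [STree.sizeL]

theorem sizeL_cons (t : STree Q) (ts : List (STree Q)) :
    STree.sizeL (t :: ts) = t.size + STree.sizeL ts := by
  simp [STree.sizeL]

theorem sizeL_eq_sum (ts : List (STree Q)) :
    STree.sizeL ts = (ts.map STree.size).sum := by
  induction ts with
  | nil => simp [STree.sizeL]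
  | cons t ts ih => simp [STree.sizeL, ih]

theorem sizeL_perm {ts us : List (STree Q)} (h : ts.Perm us) :
    STree.sizeL ts = STree.sizeL us := by
  rw [sizeL_eq_sum, sizeL_eq_sum]
  exact (h.map _).sum_eq

theorem size_mkChain (q : Q) (rest : List Q) :
    (mkChain q rest).size = 1 + rest.length := by
  induction rest generalizing q with
  | nil => simp [mkChain, STree.size, STree.sizeL]
  | cons r rest ih => simp [mkChain, STree.size, STree.sizeL, ih]; omega

theorem hasPath_mkChain (q : Q) (rest : List Q) :
    HasPath (q :: rest) (mkChain q rest) := by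
  induction rest generalizing q with
  | nil => exact .single q []
  | cons r rest ih => exact .cons q (List.mem_singleton.mpr rfl) (ih r)

theorem mkChain_le {ps : List Q} {t : STree Q} (h : HasPath ps t) :
    ∀ {q : Q} {rest : List Q}, ps = q :: rest → TreeLe (mkChain q rest) t := by
  induction h with
  | single p ts =>
      rintro q rest ⟨rfl, rfl⟩
      exact .node (.nil ts)
  | cons p hmem hpath ih =>
      rename_i ps' ts t₀
      rintro q rest ⟨rfl, rfl⟩
      cases hpath with
      | single r ts₀ => exact .node (forestLe_singleton (ih rfl) hmem)
      | cons r hmem₀ hpath₀ => exact .node (forestLe_singleton (ih rfl) hmem)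

theorem hasPath_ne_nil {ps : List Q} {t : STree Q} (h : HasPath ps t) : ps ≠ [] := by
  cases h <;> simp

theorem minFireU {ps qs : List Q} {A D : STree Q} (h : UStep ps qs A D) :
    ∃ A'' D'', TreeLe A'' A ∧ UStep ps qs A'' D'' ∧ A''.size ≤ ps.length := by
  induction h with
  | last p q rest ts =>
      refine ⟨.node p [], _, .node (.nil ts), .last p q rest [], ?_⟩
      simp [size_node, sizeL_nil]
  | delete p q hps l r hpath =>
      rename_i ps' t
      obtain ⟨p₀, ps₀, rfl⟩ : ∃ p₀ ps₀, ps' = p₀ :: ps₀ := by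
        cases ps' with
        | nil => exact absurd rfl hps
        | cons a b => exact ⟨a, b, rfl⟩
      refine ⟨.node p ([] ++ mkChain p₀ ps₀ :: []), .node q ([] ++ []),
        .node (forestLe_singleton (mkChain_le hpath rfl) (by simp)),
        .delete p q hps [] [] (hasPath_mkChain p₀ ps₀), ?_⟩
      simp [size_node, sizeL_cons, sizeL_nil, size_mkChain]
      omega
  | go p q hps hqs l r hstep ih =>
      rename_i ps' qs' t t'
      obtain ⟨t'', t''', h1, h2, h3⟩ := ih
      refine ⟨.node p ([] ++ t'' :: []), .node q ([] ++ t''' :: []),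
        .node (forestLe_singleton h1 (by simp)),
        .go p q hps hqs [] [] h2, ?_⟩
      simp [size_node, sizeL_cons, sizeL_nil]
      omega

theorem minFireR [DecidableEq Q] {ps qs : List Q} {x : Q} {A D : STree Q}
    (h : RStep ps x qs A D) :
    ∃ A'' D'', TreeLe A'' A ∧ RStep ps x qs A'' D'' ∧ A''.size ≤ ps.length := by
  induction h with
  | last p q x ts =>
      refine ⟨.node p [], _, .node (.nil ts), .last p q x [], ?_⟩
      simp [size_node, sizeL_nil]
  | go p q x hps l r hstep ih =>
      obtain ⟨t'', t''', h1, h2, h3⟩ := ih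
      refine ⟨.node p ([] ++ t'' :: []), .node q ([] ++ t''' :: []),
        .node (forestLe_singleton h1 (by simp)),
        .go p q x hps [] [] h2, ?_⟩
      simp [size_node, sizeL_cons, sizeL_nil]
      omega

end Aux2

section Aux3
variable {Q : Type}

theorem mainU {ps qs : List Q} {A D : STree Q} (h : UStep ps qs A D) :
    ∀ {C : STree Q}, TreeLe C D →
    ∃ A'' D'', TreeLe A'' A ∧ UStep ps qs A'' D'' ∧ TreeLe C D'' ∧
      A''.size ≤ C.size + ps.length := by
  induction h with
  | last p q rest ts =>
      intro C hC
      cases hC with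
      | node hf =>
          rename_i cs
          cases rest with
          | nil =>
              refine ⟨.node p cs, .node q (attachChain [] cs), .node hf,
                .last p q [] cs, TreeLe.refl _, ?_⟩
              simp [size_node]
          | cons rr rest' =>
              have hf' : ForestLe cs (mkChain rr rest' :: ts) := hf
              rcases forestLe_cons_decomp hf' with hno | ⟨c, cs', hcp, hcu, hrest⟩
              · refine ⟨.node p cs, .node q (attachChain (rr :: rest') cs),
                  .node hno, .last p q (rr :: rest') cs, .node (.skip (ForestLe.refl cs)), ?_⟩
                simp [size_node]
              · refine ⟨.node p cs', .node q (attachChain (rr :: rest') cs'),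
                  .node hrest, .last p q (rr :: rest') cs',
                  .node (forestLe_permL (.cons hcu (ForestLe.refl cs')) hcp.symm), ?_⟩
                have := sizeL_perm hcp
                simp [size_node, sizeL_cons] at this ⊢
                omega
  | delete p q hps l r hpath =>
      rename_i ps' t
      intro C hC
      cases hC with
      | node hf =>
          rename_i cs
          obtain ⟨p₀, ps₀, rfl⟩ : ∃ p₀ ps₀, ps' = p₀ :: ps₀ := by
            cases ps' with
            | nil => exact absurd rfl hps
            | cons a b => exact ⟨a, b, rfl⟩
          refine ⟨.node p ([] ++ mkChain p₀ ps₀ :: cs), .node q ([] ++ cs),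
            .node (forestLe_insert (mkChain_le hpath rfl) hf),
            .delete p q hps [] cs (hasPath_mkChain p₀ ps₀), TreeLe.refl _, ?_⟩
          simp [size_node, sizeL_cons, size_mkChain]
          omega
  | go p q hps hqs l r hstep ih =>
      rename_i ps' qs' t t'
      intro C hC
      cases hC with
      | node hf =>
          rename_i cs
          have hf' : ForestLe cs (t' :: (l ++ r)) := .permR hf List.perm_middle
          rcases forestLe_cons_decomp hf' with hno | ⟨c, cs', hcp, hcu, hrest⟩
          · obtain ⟨t'', t''', h1, h2, h3⟩ := minFireU hstep
            refine ⟨.node p ([] ++ t'' :: cs), .node q ([] ++ t''' :: cs),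
              .node (forestLe_insert h1 hno),
              .go p q hps hqs [] cs h2, .node (.skip (ForestLe.refl cs)), ?_⟩
            simp [size_node, sizeL_cons]
            omega
          · obtain ⟨t'', t''', h1, h2, h3, h4⟩ := ih hcu
            refine ⟨.node p ([] ++ t'' :: cs'), .node q ([] ++ t''' :: cs'),
              .node (forestLe_insert h1 hrest),
              .go p q hps hqs [] cs' h2,
              .node (forestLe_permL (.cons h3 (ForestLe.refl cs')) hcp.symm), ?_⟩
            have := sizeL_perm hcp
            simp [size_node, sizeL_cons] at this ⊢
            omega

theorem mainR [DecidableEq Q] {ps qs : List Q} {x : Q} {A D : STree Q}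
    (h : RStep ps x qs A D) :
    ∀ {C : STree Q}, TreeLe C D →
    ∃ A'' D'', TreeLe A'' A ∧ RStep ps x qs A'' D'' ∧ TreeLe C D'' ∧
      A''.size ≤ C.size + ps.length := by
  induction h with
  | last p q x ts =>
      intro C hC
      cases hC with
      | node hf =>
          rename_i cs
          have hcs : cs.filter (fun t => t.rootLabel ≠ x) = cs := by
            rw [List.filter_eq_self]
            intro c hc
            obtain ⟨u, hu, hle⟩ := forestLe_mem hf hc
            have := List.of_mem_filter hu
            rw [treeLe_rootLabel hle]
            exact this
          refine ⟨.node p cs, .node q (cs.filter (fun t => t.rootLabel ≠ x)),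
            .node (forestLe_sublist_right hf List.filter_sublist),
            .last p q x cs, ?_, ?_⟩
          · rw [hcs]; exact TreeLe.refl _
          · simp [size_node]
  | go p q x hps l r hstep ih =>
      rename_i ps' qs' t t'
      intro C hC
      cases hC with
      | node hf =>
          rename_i cs
          have hf' : ForestLe cs (t' :: (l ++ r)) := .permR hf List.perm_middle
          rcases forestLe_cons_decomp hf' with hno | ⟨c, cs', hcp, hcu, hrest⟩
          · obtain ⟨t'', t''', h1, h2, h3⟩ := minFireR hstep
            refine ⟨.node p ([] ++ t'' :: cs), .node q ([] ++ t''' :: cs),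
              .node (forestLe_insert h1 hno),
              .go p q x hps [] cs h2, .node (.skip (ForestLe.refl cs)), ?_⟩
            simp [size_node, sizeL_cons]
            omega
          · obtain ⟨t'', t''', h1, h2, h3, h4⟩ := ih hcu
            refine ⟨.node p ([] ++ t'' :: cs'), .node q ([] ++ t''' :: cs'),
              .node (forestLe_insert h1 hrest),
              .go p q x hps [] cs' h2,
              .node (forestLe_permL (.cons h3 (ForestLe.refl cs')) hcp.symm), ?_⟩
            have := sizeL_perm hcp
            simp [size_node, sizeL_cons] at this ⊢
            omega

end Aux3

/-- Small basis for one-step predecessors of upward closures in a `k`-NRCS: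
let `N` be a `k`-NRCS, `t` a transition of `N`, and `C` a configuration. For every
configuration `C'` such that `C' →_t D` holds for some configuration `D` with `C ≤_is D`,
there exists a configuration `C''` such that `C'' ≤_is C'`, the number of nodes of `C''` is
at most (number of nodes of `C`) + `k` + 1, and `C'' →_t D''` holds for some configuration
`D''` with `C ≤_is D''`. -/
theorem nrcs_pred_small_basis
    {Q : Type} [DecidableEq Q] [Fintype Q] {k : ℕ} (hk : 1 ≤ k)
    (N : NRCS Q k) (t : NTrans Q) (ht : N.hasTrans t)
    (C : STree Q) (hC : C.height ≤ k) (C' : STree Q) (hC' : C'.height ≤ k)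
    (h : ∃ D : STree Q, NRCS.TransStep t C' D ∧ TreeLe C D) :
    ∃ C'' : STree Q, TreeLe C'' C' ∧ C''.size ≤ C.size + k + 1 ∧
      ∃ D'' : STree Q, NRCS.TransStep t C'' D'' ∧ TreeLe C D'' := by
  cases t with
  | upd ps qs =>
      obtain ⟨D, hstep, hCD⟩ := h
      obtain ⟨C'', D'', h1, h2, h3, h4⟩ := mainU hstep hCD
      have hwf := N.update_wf (ps, qs) ht
      refine ⟨C'', h1, ?_, D'', h2, h3⟩
      have : ps.length ≤ k + 1 := hwf.2.1
      omega
  | rst ps x qs =>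
      obtain ⟨D, hstep, hCD⟩ := h
      obtain ⟨C'', D'', h1, h2, h3, h4⟩ := mainR hstep hCD
      have hwf := N.reset_wf (ps, x, qs) ht
      refine ⟨C'', h1, ?_, D'', h2, h3⟩
      have : ps.length ≤ k := hwf.2.1
      omega
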